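/- Let p be a prime, F = F_{p^m}, and θ the field automorphism x ↦ x^{p^l} with gcd(l,m) = n and k = m/n > 1. For a ∈ F*, define f_{a,θ}(x) = a·x^θ − x·a^θ. Then the image of f_{a,θ} equals {x ∈ F : Tr_{F/F_{p^n}}((a·a^θ)^{-1}·x) = 0}, where Tr_{F/F_{p^n}} is the relative trace from F to the subfield F_{p^n} fixed by θ. -/

import Mathlib

open Polynomial in
private lemma aux_ncard_root_le {F : Type} [Field F] {q : F[X]} (hq : q ≠ 0) :
    {x : F | Polynomial.eval x q = 0}.ncard ≤ q.natDegree := by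
  classical
  have hsub : {x : F | Polynomial.eval x q = 0} ⊆ (q.roots.toFinset : Set F) := by
    intro x hx
    simp only [Finset.coe_sort_coe, Multiset.mem_toFinset, Finset.mem_coe, mem_roots hq,
      IsRoot.def]
    exact hx
  calc {x : F | Polynomial.eval x q = 0}.ncard
      ≤ (q.roots.toFinset : Set F).ncard :=
        Set.ncard_le_ncard hsub (Finset.finite_toSet _)
    _ = q.roots.toFinset.card := Set.ncard_coe_finset _
    _ ≤ Multiset.card q.roots := Multiset.toFinset_card_le _
    _ ≤ q.natDegree := card_roots' q

private lemma aux_pow_mul {F : Type} [CommRing F] {p : ℕ} (y : F) (a : ℕ)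
    (hy : y ^ p ^ a = y) : ∀ t : ℕ, y ^ p ^ (a * t) = y := by
  intro t
  induction t with
  | zero => simp
  | succ t ih =>
    have h : a * (t + 1) = a * t + a := by ring
    rw [h, pow_add, pow_mul, ih, hy]

private lemma aux_gcd {F : Type} [CommRing F] (p : ℕ) :
    ∀ a b : ℕ, ∀ y : F, y ^ p ^ a = y → y ^ p ^ b = y → y ^ p ^ (Nat.gcd a b) = y := by
  intro a b
  induction a, b using Nat.gcd.induction with
  | H0 b => intro y _ h2; simpa using h2
  | H1 a b ha ih =>
    intro y h1 h2
    rw [Nat.gcd_rec]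
    refine ih y ?_ h1
    have hd : a * (b / a) + b % a = b := Nat.div_add_mod b a
    calc y ^ p ^ (b % a) = (y ^ p ^ (a * (b / a))) ^ p ^ (b % a) := by
          rw [aux_pow_mul y a h1]
      _ = y ^ p ^ (a * (b / a) + b % a) := by
          rw [pow_add]; exact (pow_mul y _ _).symm
      _ = y := by rw [hd, h2]

/-- Core lemma: range of `y ↦ y^{p^l} - y` is the kernel of the relative trace. -/
private lemma aux_core (p m l n : ℕ) (hp : p.Prime) (hm : 0 < m) (hl : 0 < l)
    (hn : n = Nat.gcd l m) (hk : 1 < m / n)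
    (F : Type) [Field F] [Fintype F] (hF : Fintype.card F = p ^ m) :
    Set.range (fun y : F => y ^ p ^ l - y) =
      {y : F | ∑ i ∈ Finset.range (m / n), y ^ p ^ (n * i) = 0} := by
  classical
  have hn0 : 0 < n := hn ▸ Nat.gcd_pos_of_pos_right l hm
  set k := m / n with hkdef
  have hnm : n ∣ m := hn ▸ Nat.gcd_dvd_right l m
  have hmk : n * k = m := Nat.mul_div_cancel' hnm
  have hnl : n ∣ l := hn ▸ Nat.gcd_dvd_left l m
  obtain ⟨l₀, hl₀⟩ := hnl
  -- characteristic
  haveI hcharF : CharP F p := by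
    haveI := ringChar.charP F
    have hqp : (ringChar F).Prime := CharP.char_is_prime F (ringChar F)
    obtain ⟨n', -, hn'⟩ := FiniteField.card F (ringChar F)
    have hdvd : ringChar F ∣ p ^ m := by
      rw [← hF, hn']; exact dvd_pow_self _ n'.2.ne'
    have heq : ringChar F = p :=
      (Nat.prime_dvd_prime_iff_eq hqp hp).mp (hqp.dvd_of_dvd_pow hdvd)
    exact heq ▸ ringChar.charP F
  haveI : Fact p.Prime := ⟨hp⟩
  haveI : ExpChar F p := ExpChar.prime hp
  -- reduce exponents mod k
  have hred : ∀ (y : F) (j : ℕ), y ^ p ^ (n * j) = y ^ p ^ (n * (j % k)) := by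
    intro y j
    have e1 : n * j = n * (j % k) + m * (j / k) := by
      conv_lhs => rw [← Nat.mod_add_div j k]
      rw [← hmk]; ring
    rw [e1]
    calc y ^ p ^ (n * (j % k) + m * (j / k))
        = (y ^ p ^ (n * (j % k))) ^ (p ^ m) ^ (j / k) := by
          rw [← pow_mul, ← pow_mul, ← pow_add]
      _ = y ^ p ^ (n * (j % k)) := by rw [← hF, FiniteField.pow_card_pow]
  -- the trace is invariant under the Frobenius θ
  have hshift : ∀ y : F,
      ∑ i ∈ Finset.range k, (y ^ p ^ l) ^ p ^ (n * i) = ∑ i ∈ Finset.range k, y ^ p ^ (n * i) := by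
    intro y
    have h1 : ∀ i : ℕ, (y ^ p ^ l) ^ p ^ (n * i) = y ^ p ^ (n * ((l₀ + i) % k)) := by
      intro i
      rw [← pow_mul, ← pow_add, show l + n * i = n * (l₀ + i) by rw [hl₀]; ring, hred]
    have hinj : ∀ x ∈ Finset.range k, ∀ y ∈ Finset.range k,
        (l₀ + x) % k = (l₀ + y) % k → x = y := by
      intro x hx y hy hxy
      simp only [Finset.mem_range] at hx hy
      have h2 : x % k = y % k := Nat.ModEq.add_left_cancel' l₀ hxy
      rwa [Nat.mod_eq_of_lt hx, Nat.mod_eq_of_lt hy] at h2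
    have himg : (Finset.range k).image (fun i => (l₀ + i) % k) = Finset.range k := by
      apply Finset.eq_of_subset_of_card_le
      · intro x hx
        simp only [Finset.mem_image, Finset.mem_range] at hx ⊢
        obtain ⟨i, -, rfl⟩ := hx
        exact Nat.mod_lt _ (by omega)
      · rw [Finset.card_image_of_injOn
          (fun x hx y hy h => hinj x (Finset.mem_coe.mp hx) y (Finset.mem_coe.mp hy) h)]
    calc ∑ i ∈ Finset.range k, (y ^ p ^ l) ^ p ^ (n * i)
        = ∑ i ∈ Finset.range k, y ^ p ^ (n * ((l₀ + i) % k)) :=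
          Finset.sum_congr rfl fun i _ => h1 i
      _ = ∑ i ∈ Finset.range k, y ^ p ^ (n * i) := by
          conv_rhs => rw [← himg]
          rw [Finset.sum_image hinj]
  -- the additive map g
  let g : F →+ F := AddMonoidHom.mk' (fun y => y ^ p ^ l - y) (fun x y => by
    show (x + y) ^ p ^ l - (x + y) = x ^ p ^ l - x + (y ^ p ^ l - y)
    rw [add_pow_char_pow]; ring)
  -- forward inclusion
  have hsub : Set.range (fun y : F => y ^ p ^ l - y) ⊆
      {y : F | ∑ i ∈ Finset.range k, y ^ p ^ (n * i) = 0} := by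
    rintro _ ⟨y, rfl⟩
    simp only [Set.mem_setOf_eq]
    have h3 : ∀ i ∈ Finset.range k,
        (y ^ p ^ l - y) ^ p ^ (n * i) = (y ^ p ^ l) ^ p ^ (n * i) - y ^ p ^ (n * i) :=
      fun i _ => by rw [sub_pow_char_pow]
    rw [Finset.sum_congr rfl h3, Finset.sum_sub_distrib, hshift, sub_self]
  -- cardinality of the RHS
  set S2 := {y : F | ∑ i ∈ Finset.range k, y ^ p ^ (n * i) = 0} with hS2
  have hS2card : S2.ncard ≤ p ^ (n * (k - 1)) := by
    set Q : Polynomial F := ∑ i ∈ Finset.range k, Polynomial.X ^ p ^ (n * i) with hQ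
    have hQeval : ∀ y : F, Polynomial.eval y Q = ∑ i ∈ Finset.range k, y ^ p ^ (n * i) := by
      intro y; rw [hQ, Polynomial.eval_finset_sum]; simp
    have hQne : Q ≠ 0 := by
      intro h0
      have hc : Q.coeff 1 = 1 := by
        rw [hQ, Polynomial.finset_sum_coeff]
        rw [Finset.sum_eq_single 0]
        · simp
        · intro i hi hi0
          rw [Polynomial.coeff_X_pow]
          have h4 : 1 < p ^ (n * i) :=
            Nat.one_lt_pow (Nat.mul_ne_zero hn0.ne' hi0) hp.one_lt
          rw [if_neg (by omega)]
        · intro h; exact absurd (Finset.mem_range.mpr (by omega)) h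
      rw [h0] at hc; simp at hc
    have hQdeg : Q.natDegree ≤ p ^ (n * (k - 1)) := by
      apply Polynomial.natDegree_sum_le_of_forall_le
      intro i hi
      rw [Polynomial.natDegree_X_pow]
      exact Nat.pow_le_pow_right hp.pos
        (Nat.mul_le_mul_left n (by have := Finset.mem_range.mp hi; omega))
    calc S2.ncard = {y : F | Polynomial.eval y Q = 0}.ncard := by
          congr 1; rw [hS2]; ext y; simp [hQeval]
      _ ≤ Q.natDegree := aux_ncard_root_le hQne
      _ ≤ p ^ (n * (k - 1)) := hQdeg
  -- cardinality of the kernel of g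
  have hker : Nat.card g.ker ≤ p ^ n := by
    have hsubker : (g.ker : Set F) ⊆
        {y : F | Polynomial.eval y (Polynomial.X ^ p ^ n - Polynomial.X) = 0} := by
      intro y hy
      simp only [SetLike.mem_coe, AddMonoidHom.mem_ker] at hy
      have h0 : y ^ p ^ l - y = 0 := hy
      have h1 : y ^ p ^ l = y := by rwa [sub_eq_zero] at h0
      have h2 : y ^ p ^ m = y := by rw [← hF, FiniteField.pow_card]
      have h3 : y ^ p ^ n = y := hn ▸ aux_gcd p l m y h1 h2
      simp [h3]
    have hpne : (Polynomial.X ^ p ^ n - Polynomial.X : Polynomial F) ≠ 0 :=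
      FiniteField.X_pow_card_pow_sub_X_ne_zero F hn0.ne' hp.one_lt
    have hdeg : (Polynomial.X ^ p ^ n - Polynomial.X : Polynomial F).natDegree = p ^ n :=
      FiniteField.X_pow_card_pow_sub_X_natDegree_eq F hn0.ne' hp.one_lt
    calc Nat.card g.ker = ((g.ker : Set F)).ncard := (Nat.card_coe_set_eq _).symm
      _ ≤ {y : F | Polynomial.eval y (Polynomial.X ^ p ^ n - Polynomial.X) = 0}.ncard :=
          Set.ncard_le_ncard hsubker (Set.toFinite _)
      _ ≤ (Polynomial.X ^ p ^ n - Polynomial.X : Polynomial F).natDegree :=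
          aux_ncard_root_le hpne
      _ = p ^ n := hdeg
  -- cardinality of the range of g
  have hrange : p ^ (n * (k - 1)) ≤ (Set.range (fun y : F => y ^ p ^ l - y)).ncard := by
    have hcards : Nat.card F = Nat.card (F ⧸ g.ker) * Nat.card g.ker :=
      AddSubgroup.card_eq_card_quotient_mul_card_addSubgroup g.ker
    have hquot : Nat.card (F ⧸ g.ker) = Nat.card g.range :=
      Nat.card_congr (QuotientAddGroup.quotientKerEquivRange g).toEquiv
    have hcardF : Nat.card F = p ^ m := by rw [Nat.card_eq_fintype_card, hF]
    have hco : (g.range : Set F) = Set.range (fun y : F => y ^ p ^ l - y) := by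
      rw [AddMonoidHom.coe_range]; rfl
    have hrangeset : (Set.range (fun y : F => y ^ p ^ l - y)).ncard = Nat.card g.range := by
      rw [← hco]; exact (Nat.card_coe_set_eq _).symm
    rw [hrangeset]
    have key : p ^ m = Nat.card g.range * Nat.card g.ker := by rw [← hcardF, hcards, hquot]
    by_contra hlt
    push_neg at hlt
    have hpn : 0 < p ^ n := pow_pos hp.pos n
    have h1 : Nat.card g.range * Nat.card g.ker ≤ Nat.card g.range * p ^ n :=
      Nat.mul_le_mul_left _ hker
    have h2 : Nat.card g.range * p ^ n < p ^ (n * (k - 1)) * p ^ n :=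
      (Nat.mul_lt_mul_right hpn).mpr hlt
    have hexp : n * (k - 1) + n = m := by
      have hk1 : k - 1 + 1 = k := by omega
      calc n * (k - 1) + n = n * (k - 1 + 1) := by ring
        _ = m := by rw [hk1, hmk]
    have h3 : p ^ m < p ^ m := by
      calc p ^ m = Nat.card g.range * Nat.card g.ker := key
        _ ≤ Nat.card g.range * p ^ n := h1
        _ < p ^ (n * (k - 1)) * p ^ n := h2
        _ = p ^ m := by rw [← pow_add, hexp]
    exact absurd h3 (lt_irrefl _)
  exact Set.eq_of_subset_of_ncard_le hsub (le_trans hS2card hrange) (Set.toFinite _)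

/-- The image of `f_{a,θ}(x) = a·x^θ − x·a^θ` equals the set of elements whose
relative trace (to the fixed subfield `F_{p^n}`) of `(a·a^θ)⁻¹ · x` is zero. -/
theorem stmt_0 (p m l n : ℕ) (hp : p.Prime) (hm : 0 < m) (hl : 0 < l)
    (hn : n = Nat.gcd l m) (hk : 1 < m / n)
    (F : Type) [Field F] [Fintype F] (hF : Fintype.card F = p ^ m)
    (a : F) (ha : a ≠ 0) :
    Set.range (fun x : F => a * x ^ p ^ l - x * a ^ p ^ l) =
      {x : F | ∑ i ∈ Finset.range (m / n), ((a * a ^ p ^ l)⁻¹ * x) ^ p ^ (n * i) = 0} := by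
  have hapow : a ^ p ^ l ≠ 0 := pow_ne_zero _ ha
  have hc : a * a ^ p ^ l ≠ 0 := mul_ne_zero ha hapow
  have hcore := aux_core p m l n hp hm hl hn hk F hF
  ext z
  simp only [Set.mem_range, Set.mem_setOf_eq]
  constructor
  · rintro ⟨x, rfl⟩
    have hx : (a * a ^ p ^ l)⁻¹ * (a * x ^ p ^ l - x * a ^ p ^ l)
        = (x * a⁻¹) ^ p ^ l - x * a⁻¹ := by
      field_simp
      rw [div_pow, mul_sub, mul_left_comm, mul_div_cancel₀ _ hapow]
    rw [hx]
    have hmem : ((x * a⁻¹) ^ p ^ l - x * a⁻¹) ∈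
        {y : F | ∑ i ∈ Finset.range (m / n), y ^ p ^ (n * i) = 0} := by
      rw [← hcore]; exact ⟨x * a⁻¹, rfl⟩
    exact hmem
  · intro hz
    have hmem : (a * a ^ p ^ l)⁻¹ * z ∈ Set.range (fun y : F => y ^ p ^ l - y) := by
      rw [hcore]; exact hz
    obtain ⟨y, hy⟩ := hmem
    refine ⟨a * y, ?_⟩
    have hxy : a * (a * y) ^ p ^ l - (a * y) * a ^ p ^ l
        = (a * a ^ p ^ l) * (y ^ p ^ l - y) := by
      rw [mul_pow]; ring
    rw [hxy, show y ^ p ^ l - y = (a * a ^ p ^ l)⁻¹ * z from hy, mul_inv_cancel_left₀ hc]
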